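/- Let n ≥ 1 and r ≥ ⌈(n+1)/4⌉ be integers. Then π(n,r) + θ(n) ≥ θ(r) + 3, where θ(m) := ⌊(8m−5)/4⌋, π(1,r) := ⌊(8r−5)/4⌋ + 3, π(2,r) := ⌊(8r−5)/4⌋ + 1, and π(n,r) := ⌊(4r−n−1)/2⌋ for n ≥ 3. -/
import Mathlib


/-- `θ(m) = ⌊(8m-5)/4⌋`. -/
def thetaZ (m : ℤ) : ℤ := ⌊(8 * (m : ℚ) - 5) / 4⌋

/-- `π(1,r) = ⌊(8r-5)/4⌋ + 3`, `π(2,r) = ⌊(8r-5)/4⌋ + 1`, and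
`π(n,r) = ⌊(4r-n-1)/2⌋` for `n ≥ 3`. -/
def piZ (n r : ℤ) : ℤ :=
  if n = 1 then ⌊(8 * (r : ℚ) - 5) / 4⌋ + 3
  else if n = 2 then ⌊(8 * (r : ℚ) - 5) / 4⌋ + 1
  else ⌊(4 * (r : ℚ) - (n : ℚ) - 1) / 2⌋

lemma floorAux (a : ℤ) (d : ℕ) : ⌊((a : ℚ)) / (d : ℚ)⌋ = a / (d : ℤ) :=
  Rat.floor_intCast_div_natCast a d

/-- The key arithmetic estimate: for integers `n ≥ 1` and `r ≥ ⌈(n+1)/4⌉`,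
`π(n,r) + θ(n) ≥ θ(r) + 3`. -/
theorem stmt10 (n r : ℤ) (hn : 1 ≤ n) (hr : ⌈((n : ℚ) + 1) / 4⌉ ≤ r) :
    piZ n r + thetaZ n ≥ thetaZ r + 3 := by
  have hc : ((n : ℚ) + 1) / 4 = ((n + 1 : ℤ) : ℚ) / ((4 : ℕ) : ℚ) := by push_cast; ring
  rw [hc] at hr
  have hr2 : -((-(n+1) : ℤ) / ((4:ℕ) : ℤ)) ≤ r := by
    rw [← floorAux, show (((-(n+1) : ℤ)) : ℚ) / ((4:ℕ) : ℚ) = -(((n + 1 : ℤ) : ℚ) / ((4:ℕ) : ℚ)) by push_cast; ring, Int.floor_neg, neg_neg]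
    exact hr
  norm_num at hr2
  clear hr
  have e1 : thetaZ n = (8 * n - 5) / 4 := by
    unfold thetaZ
    rw [show (8 * (n : ℚ) - 5) / 4 = ((8 * n - 5 : ℤ) : ℚ) / ((4:ℕ) : ℚ) by push_cast; ring,
      floorAux]
    norm_num
  have e2 : thetaZ r = (8 * r - 5) / 4 := by
    unfold thetaZ
    rw [show (8 * (r : ℚ) - 5) / 4 = ((8 * r - 5 : ℤ) : ℚ) / ((4:ℕ) : ℚ) by push_cast; ring,
      floorAux]
    norm_num
  have e3 : (⌊(8 * (r : ℚ) - 5) / 4⌋ : ℤ) = (8 * r - 5) / 4 := by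
    rw [show (8 * (r : ℚ) - 5) / 4 = ((8 * r - 5 : ℤ) : ℚ) / ((4:ℕ) : ℚ) by push_cast; ring,
      floorAux]
    norm_num
  have e4 : (⌊(4 * (r : ℚ) - (n : ℚ) - 1) / 2⌋ : ℤ) = (4 * r - n - 1) / 2 := by
    rw [show (4 * (r : ℚ) - (n : ℚ) - 1) / 2 = ((4 * r - n - 1 : ℤ) : ℚ) / ((2:ℕ) : ℚ) by
      push_cast; ring, floorAux]
    norm_num
  unfold piZ
  split_ifs with h1' h2' <;> simp_all <;> omega
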